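/- Let n be divisible by 6 and let |φ⟩ be a unit vector in (ℂ²)^{⊗n} with U(g)|φ⟩ = |φ⟩ for every g ∈ ℤ₂×ℤ₂. Then for all distinct nontrivial g, h ∈ ℤ₂×ℤ₂, P_n^{(Q)}(g,h | |φ⟩⟨φ|) = (13 + 3⟨φ| S_{[1, n/6+1]}(g) |φ⟩)/16. Consequently, if ⟨φ| S_{[1, n/6+1]}(g) |φ⟩ > 1/3 for every nontrivial g, then min over distinct nontrivial g, h of P_n^{(Q)}(g,h | |φ⟩⟨φ|) exceeds 7/8. -/

import Mathlib

open Matrix Complex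
open scoped ComplexOrder

noncomputable section

/-- The state space of `n` qubits, as functions on classical bit strings. -/
abbrev QState (n : ℕ) := (Fin n → Fin 2) → ℂ

/-- Operators on `n` qubits: `2^n × 2^n` complex matrices. -/
abbrev Op (n : ℕ) := Matrix (Fin n → Fin 2) (Fin n → Fin 2) ℂ

/-- The single-qubit Pauli `X` matrix. -/
def Xmat : Matrix (Fin 2) (Fin 2) ℂ := !![0, 1; 1, 0]

/-- The single-qubit Pauli `Z` matrix. -/
def Zmat : Matrix (Fin 2) (Fin 2) ℂ := !![1, 0; 0, -1]

/-- Map a 1-based cyclic site label `j ∈ {1,…,n}` (taken mod `n`) to an index in `Fin n`. -/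
def site (n : ℕ) [NeZero n] (j : ℕ) : Fin n :=
  ⟨(j + (n - 1)) % n, Nat.mod_lt _ (Nat.pos_of_ne_zero (NeZero.ne n))⟩

/-- The operator acting as the single-qubit matrix `M` on qubit `i` and as identity elsewhere. -/
def onSite (n : ℕ) (i : Fin n) (M : Matrix (Fin 2) (Fin 2) ℂ) : Op n :=
  Matrix.of fun s t => (if ∀ k, k ≠ i → s k = t k then 1 else 0) * M (s i) (t i)

/-- Pauli `X` on (1-based, cyclic) site `j`. -/
def PX (n : ℕ) [NeZero n] (j : ℕ) : Op n := onSite n (site n j) Xmat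

/-- Pauli `Z` on (1-based, cyclic) site `j`. -/
def PZ (n : ℕ) [NeZero n] (j : ℕ) : Op n := onSite n (site n j) Zmat

/-- The cyclic cluster stabilizer `K_j = Z_{j-1} X_j Z_{j+1}` (for `1 ≤ j ≤ n`). -/
def Kstab (n : ℕ) [NeZero n] (j : ℕ) : Op n := PZ n (j - 1) * PX n j * PZ n (j + 1)

/-- The symmetry group `ℤ₂ × ℤ₂`. -/
abbrev G2 := ZMod 2 × ZMod 2

/-- The nontrivial element `x = (0,1)` of `ℤ₂ × ℤ₂`. -/
def gx : G2 := (0, 1)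

/-- The nontrivial element `y = (1,0)` of `ℤ₂ × ℤ₂`. -/
def gy : G2 := (1, 0)

/-- The nontrivial element `z = (1,1)` of `ℤ₂ × ℤ₂`. -/
def gz : G2 := (1, 1)

/-- The global symmetry representation `U((a,b)) = ∏_{j odd} X_j^a ∏_{j even} X_j^b`
on `n` qubits (`n` even), written as a product over the `n/2` two-site blocks. -/
def Usym (n : ℕ) [NeZero n] (g : G2) : Op n :=
  ((List.range (n / 2)).map
    (fun p => PX n (2 * p + 1) ^ g.1.val * PX n (2 * p + 2) ^ g.2.val)).prod

/-- Left boundary operator `V^L_p((a,b))`: `Z^b` on qubit `2p-1` and `X^b Z^a` on qubit `2p`. -/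
def VL (n : ℕ) [NeZero n] (p : ℕ) (g : G2) : Op n :=
  PZ n (2 * p - 1) ^ g.2.val * (PX n (2 * p) ^ g.2.val * PZ n (2 * p) ^ g.1.val)

/-- Right boundary operator `V^R_p((a,b))`: `Z^b X^a` on qubit `2p-1` and `Z^a` on qubit `2p`. -/
def VR (n : ℕ) [NeZero n] (p : ℕ) (g : G2) : Op n :=
  (PZ n (2 * p - 1) ^ g.2.val * PX n (2 * p - 1) ^ g.1.val) * PZ n (2 * p) ^ g.1.val

/-- Truncated symmetry `U_{[p,q]}((a,b)) = ∏_{r=p+1}^{q-1} X_{2r-1}^a X_{2r}^b`. -/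
def Ustr (n : ℕ) [NeZero n] (p q : ℕ) (g : G2) : Op n :=
  ((List.range (q - (p + 1))).map
    (fun r => PX n (2 * (p + 1 + r) - 1) ^ g.1.val * PX n (2 * (p + 1 + r)) ^ g.2.val)).prod

/-- The string order parameter `S_{[p,q]}(g) = V^L_p(g) · U_{[p,q]}(g) · V^R_q(g)`. -/
def SOPm (n : ℕ) [NeZero n] (p q : ℕ) (g : G2) : Op n :=
  VL n p g * Ustr n p q g * VR n q g

/-- The twisted string order parameter
`T_{[p,q]}^{(g,h)} = V^R_q(g) · U(h) · V^L_p(g) · U_{[p,q]}(g)`. -/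
def TSOP (n : ℕ) [NeZero n] (p q : ℕ) (g h : G2) : Op n :=
  VR n q g * Usym n h * VL n p g * Ustr n p q g

/-- The triangle-game winning operator
`O_{g,h} = (1/32)(12·1 + 12 U(g) + U(h) + U(gh) − 3T − 3U(g)T)` with `T = T_{[1,n/6+1]}^{(g,h)}`. -/
def Owin (n : ℕ) [NeZero n] (g h : G2) : Op n :=
  (32 : ℂ)⁻¹ • (12 • (1 : Op n) + 12 • Usym n g + Usym n h + Usym n (g + h)
    - 3 • TSOP n 1 (n / 6 + 1) g h - 3 • (Usym n g * TSOP n 1 (n / 6 + 1) g h))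

/-- The `n`-fold tensor product `|+⟩^{⊗n}`, with all amplitudes `(1/√2)^n`. -/
def plusState (n : ℕ) : QState n := fun _ => (((Real.sqrt 2)⁻¹ : ℝ) : ℂ) ^ n

/-- The controlled-`Z` gate between (1-based, cyclic) sites `j` and `k`. -/
def CZm (n : ℕ) [NeZero n] (j k : ℕ) : Op n :=
  Matrix.of fun s t =>
    if s = t then (if s (site n j) = 1 ∧ s (site n k) = 1 then -1 else 1) else 0

/-- The `n`-qubit cyclic cluster state `|C_n⟩ = (∏_{j=1}^n CZ_{j,j+1}) |+⟩^{⊗n}`. -/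
def cluster (n : ℕ) [NeZero n] : QState n :=
  (((List.range n).map (fun j => CZm n (j + 1) (j + 2))).prod).mulVec (plusState n)

namespace PauliDev

variable {n : ℕ} [NeZero n]
set_option linter.unusedSectionVars false

/-- sign of a bit -/
def sgn (c : Fin 2) : ℂ := if c = 0 then 1 else -1

lemma sgn_add (a b : Fin 2) : sgn (a + b) = sgn a * sgn b := by
  fin_cases a <;> fin_cases b <;> simp [sgn]

lemma sgn_zero : sgn 0 = 1 := rfl
lemma sgn_one : sgn 1 = -1 := rfl

/-- mod-2 dot product of bit patterns -/
def dotF (z x : Fin n → Fin 2) : Fin 2 := ∑ k, z k * x k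

lemma dotF_zero_left (x : Fin n → Fin 2) : dotF 0 x = 0 := by
  simp [dotF]

lemma dotF_zero_right (z : Fin n → Fin 2) : dotF z 0 = 0 := by
  simp [dotF]

lemma dotF_add_right (z x y : Fin n → Fin 2) : dotF z (x + y) = dotF z x + dotF z y := by
  simp [dotF, mul_add, Finset.sum_add_distrib]

lemma dotF_add_left (z w x : Fin n → Fin 2) : dotF (z + w) x = dotF z x + dotF w x := by
  simp [dotF, add_mul, Finset.sum_add_distrib]

/-- the Pauli word X^x Z^z -/
def Pauli (x z : Fin n → Fin 2) : Op n :=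
  Matrix.of fun s t => if s = t + x then sgn (dotF z t) else 0

lemma Pauli_mul (x z x' z' : Fin n → Fin 2) :
    Pauli x z * Pauli x' z' = sgn (dotF z x') • Pauli (x + x') (z + z') := by
  ext s t
  simp only [Matrix.mul_apply, Pauli, Matrix.of_apply, Matrix.smul_apply, smul_eq_mul]
  rw [Finset.sum_eq_single (t + x')]
  · by_cases h : s = t + (x + x')
    · have h2 : s = t + x' + x := by rw [h]; abel
      rw [if_pos h2, if_pos rfl, if_pos h, dotF_add_right, sgn_add, dotF_add_left, sgn_add]
      ring
    · have h2 : ¬ (s = t + x' + x) := by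
        intro hc; apply h; rw [hc]; abel
      rw [if_neg h2, if_neg h, zero_mul, mul_zero]
  · intro u _ hu
    rw [if_neg hu, mul_zero]
  · intro h; exact absurd (Finset.mem_univ _) h

lemma Pauli_zero_zero : (Pauli 0 0 : Op n) = 1 := by
  ext s t
  simp [Pauli, Matrix.one_apply, dotF_zero_left, sgn_zero, eq_comm]

lemma add_self_bits (x : Fin n → Fin 2) : x + x = 0 := by
  have h2 : ∀ a : Fin 2, a + a = 0 := by decide
  exact funext fun k => h2 (x k)

lemma Pauli_conjTranspose (x : Fin n → Fin 2) :
    (Pauli x 0 : Op n)ᴴ = Pauli x 0 := by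
  ext s t
  have hiff : t = s + x ↔ s = t + x := by
    constructor <;> (intro h; rw [h, add_assoc, add_self_bits, add_zero])
  rw [Matrix.conjTranspose_apply]
  simp only [Pauli, Matrix.of_apply, dotF_zero_left, sgn_zero]
  rw [if_congr hiff rfl rfl]
  split <;> simp



/-- delta pattern with value c at site i -/
def dlt (n : ℕ) (c : Fin 2) (i : Fin n) : Fin n → Fin 2 := fun k => if k = i then c else 0

lemma dlt_zero (i : Fin n) : dlt n 0 i = 0 := by
  funext k; simp [dlt]

lemma dotF_dlt_left (c : Fin 2) (i : Fin n) (x : Fin n → Fin 2) :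
    dotF (dlt n c i) x = c * x i := by
  unfold dotF dlt
  rw [Finset.sum_eq_single i]
  · simp
  · intro b _ hb; simp [hb]
  · intro h; exact absurd (Finset.mem_univ _) h

lemma dotF_dlt_right (c : Fin 2) (i : Fin n) (z : Fin n → Fin 2) :
    dotF z (dlt n c i) = z i * c := by
  unfold dotF dlt
  rw [Finset.sum_eq_single i]
  · simp
  · intro b _ hb; simp [hb]
  · intro h; exact absurd (Finset.mem_univ _) h

lemma Xmat_apply (a b : Fin 2) : Xmat a b = if a = b + 1 then 1 else 0 := by
  fin_cases a <;> fin_cases b <;> simp [Xmat]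

lemma Zmat_apply (a b : Fin 2) : Zmat a b = if a = b then sgn b else 0 := by
  fin_cases a <;> fin_cases b <;> simp [Zmat, sgn]

lemma PX_eq (j : ℕ) : PX n j = Pauli (dlt n 1 (site n j)) 0 := by
  set i := site n j
  ext s t
  simp only [PX, onSite, Pauli, Matrix.of_apply, dotF_zero_left, sgn_zero, Xmat_apply]
  have hiff : s = t + dlt n 1 i ↔ (∀ k, k ≠ i → s k = t k) ∧ s i = t i + 1 := by
    constructor
    · intro h
      constructor
      · intro k hk
        have := congrFun h k
        simpa [dlt, hk] using this
      · have := congrFun h i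
        simpa [dlt] using this
    · rintro ⟨h1, h2⟩
      funext k
      by_cases hk : k = i
      · subst hk; simpa [dlt] using h2
      · simpa [dlt, hk] using h1 k hk
  by_cases h1 : ∀ k, k ≠ i → s k = t k
  · by_cases h2 : s i = t i + 1
    · rw [if_pos (hiff.2 ⟨h1, h2⟩), if_pos h1, if_pos h2, one_mul]
    · rw [if_neg (fun hc => h2 (hiff.1 hc).2), if_pos h1, if_neg h2, one_mul]
  · rw [if_neg (fun hc => h1 (hiff.1 hc).1), if_neg h1, zero_mul]

lemma PZ_eq (j : ℕ) : PZ n j = Pauli 0 (dlt n 1 (site n j)) := by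
  set i := site n j
  ext s t
  simp only [PZ, onSite, Pauli, Matrix.of_apply, Zmat_apply, add_zero, dotF_dlt_left, one_mul]
  have hiff : s = t ↔ (∀ k, k ≠ i → s k = t k) ∧ s i = t i := by
    constructor
    · intro h; subst h; exact ⟨fun _ _ => rfl, rfl⟩
    · rintro ⟨h1, h2⟩
      funext k
      by_cases hk : k = i
      · subst hk; exact h2
      · exact h1 k hk
  by_cases h1 : ∀ k, k ≠ i → s k = t k
  · by_cases h2 : s i = t i
    · rw [if_pos (hiff.2 ⟨h1, h2⟩), if_pos h1, if_pos h2, one_mul]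
    · rw [if_neg (fun hc => h2 (hiff.1 hc).2), if_pos h1, if_neg h2, one_mul]
  · rw [if_neg (fun hc => h1 (hiff.1 hc).1), if_neg h1, zero_mul]

lemma zmod2_cases (c : ZMod 2) : c = 0 ∨ c = 1 := by revert c; decide

lemma PX_pow (j : ℕ) (c : ZMod 2) :
    PX n j ^ c.val = Pauli (dlt n c (site n j)) 0 := by
  rcases zmod2_cases c with h | h <;> subst h
  · rw [show (0 : ZMod 2).val = 0 from rfl, pow_zero, show @Eq (Fin 2) (0 : ZMod 2) 0 from rfl,
      dlt_zero, Pauli_zero_zero]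
  · rw [show (1 : ZMod 2).val = 1 from rfl, pow_one, PX_eq]; rfl

lemma PZ_pow (j : ℕ) (c : ZMod 2) :
    PZ n j ^ c.val = Pauli 0 (dlt n c (site n j)) := by
  rcases zmod2_cases c with h | h <;> subst h
  · rw [show (0 : ZMod 2).val = 0 from rfl, pow_zero, show @Eq (Fin 2) (0 : ZMod 2) 0 from rfl,
      dlt_zero, Pauli_zero_zero]
  · rw [show (1 : ZMod 2).val = 1 from rfl, pow_one, PZ_eq]; rfl

lemma site_val (j : ℕ) (h1 : 1 ≤ j) (h2 : j ≤ n) : (site n j).val = j - 1 := by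
  have hn : 0 < n := Nat.pos_of_ne_zero (NeZero.ne n)
  show (j + (n - 1)) % n = j - 1
  have : j + (n - 1) = (j - 1) + n := by omega
  rw [this, Nat.add_mod_right, Nat.mod_eq_of_lt (by omega)]

lemma range_map_sum {M : Type*} [AddCommMonoid M] (f : ℕ → M) (m : ℕ) :
    ((List.range m).map f).sum = ∑ p ∈ Finset.range m, f p := by
  induction m with
  | zero => simp
  | succ m ih => rw [List.range_succ, List.map_append, List.sum_append,
      Finset.sum_range_succ, ih]; simp

lemma prod_PauliX (L : List (Fin n → Fin 2)) :
    (L.map (fun x => Pauli (n := n) x 0)).prod = Pauli L.sum 0 := by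
  induction L with
  | nil => simpa using (Pauli_zero_zero (n := n)).symm
  | cons x L ih =>
      rw [List.map_cons, List.prod_cons, ih, Pauli_mul, dotF_zero_left, sgn_zero, one_smul,
        List.sum_cons, add_zero]

/-- the X-pattern of `Usym n h` -/
def Xpat (n : ℕ) [NeZero n] (h : G2) : Fin n → Fin 2 :=
  ∑ p ∈ Finset.range (n / 2), (dlt n h.1 (site n (2 * p + 1)) + dlt n h.2 (site n (2 * p + 2)))

lemma Usym_eq (h : G2) : Usym n h = Pauli (Xpat n h) 0 := by
  unfold Usym Xpat
  have hb : ∀ p : ℕ, PX n (2 * p + 1) ^ h.1.val * PX n (2 * p + 2) ^ h.2.val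
      = Pauli (dlt n h.1 (site n (2 * p + 1)) + dlt n h.2 (site n (2 * p + 2))) 0 := by
    intro p
    rw [PX_pow, PX_pow, Pauli_mul, dotF_zero_left, sgn_zero, one_smul, add_zero]
  simp only [hb]
  rw [show (fun p => Pauli (dlt n (h.1 : Fin 2) (site n (2 * p + 1))
        + dlt n (h.2 : Fin 2) (site n (2 * p + 2))) 0)
      = (fun x => Pauli (n := n) x 0) ∘ (fun p => dlt n (h.1 : Fin 2) (site n (2 * p + 1))
        + dlt n (h.2 : Fin 2) (site n (2 * p + 2))) from rfl,
    ← List.map_map, prod_PauliX, range_map_sum]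

/-- the X-pattern of `Ustr n 1 q g` -/
def Upat (n : ℕ) [NeZero n] (q : ℕ) (g : G2) : Fin n → Fin 2 :=
  ∑ r ∈ Finset.range (q - 2), (dlt n g.1 (site n (2 * (2 + r) - 1)) + dlt n g.2 (site n (2 * (2 + r))))

lemma Ustr_eq (q : ℕ) (g : G2) : Ustr n 1 q g = Pauli (Upat n q g) 0 := by
  unfold Ustr Upat
  have hb : ∀ r : ℕ, PX n (2 * (1 + 1 + r) - 1) ^ g.1.val * PX n (2 * (1 + 1 + r)) ^ g.2.val
      = Pauli (dlt n g.1 (site n (2 * (2 + r) - 1)) + dlt n g.2 (site n (2 * (2 + r)))) 0 := by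
    intro r
    rw [PX_pow, PX_pow, Pauli_mul, dotF_zero_left, sgn_zero, one_smul, add_zero]
  simp only [hb]
  rw [show (fun r => Pauli (dlt n (g.1 : Fin 2) (site n (2 * (2 + r) - 1))
        + dlt n (g.2 : Fin 2) (site n (2 * (2 + r)))) 0)
      = (fun x => Pauli (n := n) x 0) ∘ (fun r => dlt n (g.1 : Fin 2) (site n (2 * (2 + r) - 1))
        + dlt n (g.2 : Fin 2) (site n (2 * (2 + r)))) from rfl,
    ← List.map_map, prod_PauliX, range_map_sum]

lemma dlt_apply_self (c : Fin 2) (i : Fin n) : dlt n c i i = c := by simp [dlt]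

lemma dlt_apply_ne (c : Fin 2) {i k : Fin n} (h : k ≠ i) : dlt n c i k = 0 := by simp [dlt, h]

lemma site_inj {u v : ℕ} (hu1 : 1 ≤ u) (hu2 : u ≤ n) (hv1 : 1 ≤ v) (hv2 : v ≤ n) :
    site n u = site n v ↔ u = v := by
  rw [Fin.ext_iff, site_val u hu1 hu2, site_val v hv1 hv2]; omega

lemma site_ne {u v : ℕ} (hu1 : 1 ≤ u) (hu2 : u ≤ n) (hv1 : 1 ≤ v) (hv2 : v ≤ n)
    (huv : u ≠ v) : site n u ≠ site n v := by
  rw [Ne, site_inj hu1 hu2 hv1 hv2]; exact huv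

lemma Xpat_apply_odd (h : G2) (p₀ : ℕ) (hp : p₀ < n / 2) :
    Xpat n h (site n (2 * p₀ + 1)) = h.1 := by
  have h2 : 2 * (n / 2) ≤ n := by omega
  unfold Xpat
  rw [Finset.sum_apply, Finset.sum_eq_single p₀]
  · rw [Pi.add_apply, dlt_apply_self (c := h.1),
      dlt_apply_ne h.2 (site_ne (by omega) (by omega) (by omega) (by omega) (by omega)), add_zero (M := Fin 2) h.1]
  · intro p hp' hne
    rw [Finset.mem_range] at hp'
    rw [Pi.add_apply,
      dlt_apply_ne h.1 (site_ne (by omega) (by omega) (by omega) (by omega) (by omega)),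
      dlt_apply_ne h.2 (site_ne (by omega) (by omega) (by omega) (by omega) (by omega)), add_zero]
  · intro hc; exact absurd (Finset.mem_range.2 hp) hc

lemma Xpat_apply_even (h : G2) (p₀ : ℕ) (hp : p₀ < n / 2) :
    Xpat n h (site n (2 * p₀ + 2)) = h.2 := by
  have h2 : 2 * (n / 2) ≤ n := by omega
  unfold Xpat
  rw [Finset.sum_apply, Finset.sum_eq_single p₀]
  · rw [Pi.add_apply, dlt_apply_self (c := h.2),
      dlt_apply_ne h.1 (site_ne (by omega) (by omega) (by omega) (by omega) (by omega)), zero_add (M := Fin 2) h.2]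
  · intro p hp' hne
    rw [Finset.mem_range] at hp'
    rw [Pi.add_apply,
      dlt_apply_ne h.1 (site_ne (by omega) (by omega) (by omega) (by omega) (by omega)),
      dlt_apply_ne h.2 (site_ne (by omega) (by omega) (by omega) (by omega) (by omega)), add_zero]
  · intro hc; exact absurd (Finset.mem_range.2 hp) hc

lemma Upat_apply_zero (g : G2) (q v : ℕ) (hq : 2 * q ≤ n) (hv1 : 1 ≤ v) (hv2 : v ≤ n)
    (hv : v ≤ 2 ∨ 2 * q - 2 < v) : Upat n q g (site n v) = 0 := by
  unfold Upat
  rw [Finset.sum_apply]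
  apply Finset.sum_eq_zero
  intro r hr
  rw [Finset.mem_range] at hr
  rw [Pi.add_apply,
    dlt_apply_ne g.1 (site_ne hv1 hv2 (by omega) (by omega) (by omega)),
    dlt_apply_ne g.2 (site_ne hv1 hv2 (by omega) (by omega) (by omega)), add_zero]

lemma VL_one_eq (hn2 : 2 ≤ n) (g : G2) :
    VL n 1 g = Pauli (dlt n g.2 (site n 2)) (dlt n g.2 (site n 1) + dlt n g.1 (site n 2)) := by
  have h12 : site n 1 ≠ site n 2 :=
    site_ne (by omega) (by omega) (by omega) (by omega) (by omega)
  unfold VL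
  norm_num
  rw [PZ_pow, PX_pow, PZ_pow, Pauli_mul, dotF_zero_left, sgn_zero, one_smul, add_zero, zero_add,
    Pauli_mul, dotF_dlt_left g.2, dlt_apply_ne g.2 h12, @mul_zero (Fin 2) _ g.2, sgn_zero, one_smul, zero_add]

lemma VR_eq (q : ℕ) (g : G2) :
    VR n q g = sgn ((g.2 : Fin 2) * (g.1 : Fin 2)) •
      Pauli (dlt n g.1 (site n (2 * q - 1)))
        (dlt n g.2 (site n (2 * q - 1)) + dlt n g.1 (site n (2 * q))) := by
  unfold VR
  rw [PZ_pow, PX_pow, PZ_pow, Pauli_mul, dotF_dlt_left g.2, dlt_apply_self (c := g.1), smul_mul_assoc, Pauli_mul, dotF_zero_right, sgn_zero, one_smul, zero_add, add_zero, add_zero]; rfl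

lemma SOPm_eq (q : ℕ) (hq2 : 2 ≤ q) (hqn : 2 * q ≤ n) (g : G2) :
    SOPm n 1 q g = sgn ((g.2 : Fin 2) * (g.1 : Fin 2)) •
      Pauli (dlt n g.2 (site n 2) + Upat n q g + dlt n g.1 (site n (2 * q - 1)))
        (dlt n g.2 (site n 1) + dlt n g.1 (site n 2)
          + (dlt n g.2 (site n (2 * q - 1)) + dlt n g.1 (site n (2 * q)))) := by
  unfold SOPm
  rw [VL_one_eq (by omega), Ustr_eq, VR_eq, Pauli_mul, dotF_add_left, dotF_dlt_left g.2,
    dotF_dlt_left g.1, Upat_apply_zero g q 1 hqn (by omega) (by omega) (by omega),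
    Upat_apply_zero g q 2 hqn (by omega) (by omega) (by omega), @mul_zero (Fin 2) _ g.2, @mul_zero (Fin 2) _ g.1, add_zero,
    sgn_zero, one_smul, add_zero, mul_smul_comm, Pauli_mul, dotF_dlt_right g.1, Pi.add_apply,
    dlt_apply_ne g.2 (site_ne (by omega) (by omega) (by omega) (by omega) (by omega)),
    dlt_apply_ne g.1 (site_ne (by omega) (by omega) (by omega) (by omega) (by omega)),
    add_zero, @zero_mul (Fin 2) _ g.1, sgn_zero, one_smul]

lemma TSOP_rel (q : ℕ) (hq2 : 2 ≤ q) (hqn : 2 * q ≤ n) (g h : G2) :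
    TSOP n 1 q g h = (sgn ((g.2 : Fin 2) * (h.1 : Fin 2)) * sgn ((g.1 : Fin 2) * (h.2 : Fin 2))) •
      (Usym n h * SOPm n 1 q g) := by
  have hx1 : Xpat n h (site n (2 * q - 1)) = h.1 := by
    rw [show 2 * q - 1 = 2 * (q - 1) + 1 by omega]
    exact Xpat_apply_odd h (q - 1) (by omega)
  have hx2 : Xpat n h (site n (2 * q)) = h.2 := by
    rw [show 2 * q = 2 * (q - 1) + 2 by omega]
    exact Xpat_apply_even h (q - 1) (by omega)
  have hU1 : Upat n q g (site n 1) = 0 :=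
    Upat_apply_zero g q 1 hqn (by omega) (by omega) (by omega)
  have hU2 : Upat n q g (site n 2) = 0 :=
    Upat_apply_zero g q 2 hqn (by omega) (by omega) (by omega)
  have hU3 : Upat n q g (site n (2 * q - 1)) = 0 :=
    Upat_apply_zero g q (2 * q - 1) hqn (by omega) (by omega) (by omega)
  have hU4 : Upat n q g (site n (2 * q)) = 0 :=
    Upat_apply_zero g q (2 * q) hqn (by omega) (by omega) (by omega)
  have e1 : dlt n (g.2 : Fin 2) (site n (2 * q - 1)) (site n 2) = 0 :=
    dlt_apply_ne _ (site_ne (by omega) (by omega) (by omega) (by omega) (by omega))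
  have e2 : dlt n (g.1 : Fin 2) (site n (2 * q)) (site n 2) = 0 :=
    dlt_apply_ne _ (site_ne (by omega) (by omega) (by omega) (by omega) (by omega))
  have e3 : dlt n (g.2 : Fin 2) (site n 1) (site n (2 * q - 1)) = 0 :=
    dlt_apply_ne _ (site_ne (by omega) (by omega) (by omega) (by omega) (by omega))
  have e4 : dlt n (g.1 : Fin 2) (site n 2) (site n (2 * q - 1)) = 0 :=
    dlt_apply_ne _ (site_ne (by omega) (by omega) (by omega) (by omega) (by omega))
  unfold TSOP
  rw [VR_eq, Usym_eq, VL_one_eq (by omega), Ustr_eq, SOPm_eq q hq2 hqn]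
  simp only [smul_mul_assoc, mul_smul_comm, smul_smul, Pauli_mul]
  simp only [dotF_add_left, dotF_add_right, dotF_zero_left, dotF_zero_right, dotF_dlt_left g.1, dotF_dlt_left g.2,
    dotF_dlt_right g.1, dotF_dlt_right g.2, Pi.add_apply, Pi.zero_apply, hx1, hx2, hU1, hU2, hU3, hU4, e1, e2, e3, e4,
    dlt_apply_self, mul_zero, zero_mul, add_zero, zero_add, sgn_zero, mul_one, one_mul,
    sgn_add, one_smul, @mul_zero (Fin 2) _ g.2, @mul_zero (Fin 2) _ g.1, @zero_mul (Fin 2) _ g.2,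
    @zero_mul (Fin 2) _ g.1]
  congr 1
  · exact mul_comm _ _
  · congr 1 <;> abel

lemma eps_eval (g h : G2) (hg : g ≠ 0) (hh : h ≠ 0) (hgh : g ≠ h) :
    sgn ((g.2 : Fin 2) * (h.1 : Fin 2)) * sgn ((g.1 : Fin 2) * (h.2 : Fin 2)) = -1 := by
  have key : ((g.2 : Fin 2) * (h.1 : Fin 2) + (g.1 : Fin 2) * (h.2 : Fin 2)) = 1 := by
    revert hg hh hgh; revert g h; decide
  exact (sgn_add _ _).symm.trans (by erw [key]; exact sgn_one)

lemma Usym_herm (g : G2) : (Usym n g)ᴴ = Usym n g := by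
  rw [Usym_eq, Pauli_conjTranspose]

lemma trace_outer (φ : QState n) (A : Op n) :
    (Matrix.vecMulVec φ (star φ) * A).trace = star φ ⬝ᵥ A.mulVec φ := by
  simp only [Matrix.trace, Matrix.diag, Matrix.mul_apply, Matrix.vecMulVec_apply,
    dotProduct, Matrix.mulVec, Pi.star_apply]
  rw [Finset.sum_comm]
  refine Finset.sum_congr rfl fun t _ => ?_
  rw [Finset.mul_sum]
  exact Finset.sum_congr rfl fun s _ => by ring

end PauliDev

open PauliDev

/-- For a symmetric pure state `|φ⟩` (fixed by all `U(g)`), the triangle-game winning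
probability is `P_n^{(Q)}(g,h||φ⟩⟨φ|) = (13 + 3⟨φ|S_{[1,n/6+1]}(g)|φ⟩)/16`; consequently, if
all three nontrivial string order parameters exceed `1/3`, the minimum winning probability
exceeds `7/8`. -/
theorem symmetric_pure_state_winning_probability (n : ℕ) [NeZero n] (hn : 6 ∣ n)
    (φ : QState n) (hunit : star φ ⬝ᵥ φ = 1)
    (hsym : ∀ g : G2, (Usym n g).mulVec φ = φ) :
    (∀ g h : G2, g ≠ 0 → h ≠ 0 → g ≠ h →
      (Matrix.vecMulVec φ (star φ) * Owin n g h).trace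
        = (13 + 3 * (star φ ⬝ᵥ (SOPm n 1 (n / 6 + 1) g).mulVec φ)) / 16) ∧
    ((∀ g : G2, g ≠ 0 → 1 / 3 < (star φ ⬝ᵥ (SOPm n 1 (n / 6 + 1) g).mulVec φ).re) →
      ∀ g h : G2, g ≠ 0 → h ≠ 0 → g ≠ h →
        7 / 8 < ((Matrix.vecMulVec φ (star φ) * Owin n g h).trace).re) := by
  obtain ⟨m, hm⟩ := hn
  have hm1 : 1 ≤ m := by
    rcases Nat.eq_zero_or_pos m with h | h
    · exact absurd (by omega : n = 0) (NeZero.ne n)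
    · exact h
  have hq2 : 2 ≤ n / 6 + 1 := by omega
  have hqn : 2 * (n / 6 + 1) ≤ n := by omega
  have hvm : ∀ g' : G2, star φ ᵥ* Usym n g' = star φ := by
    intro g'
    calc star φ ᵥ* Usym n g' = star φ ᵥ* (Usym n g')ᴴ := by rw [Usym_herm]
      _ = star (Usym n g' *ᵥ φ) := (Matrix.star_mulVec _ _).symm
      _ = star φ := by rw [hsym]
  have hdot : ∀ (g' : G2) (A : Op n), star φ ⬝ᵥ (Usym n g' * A) *ᵥ φ = star φ ⬝ᵥ A *ᵥ φ := by
    intro g' A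
    rw [← Matrix.mulVec_mulVec, Matrix.dotProduct_mulVec, hvm]
  have key : ∀ g h : G2, g ≠ 0 → h ≠ 0 → g ≠ h →
      (Matrix.vecMulVec φ (star φ) * Owin n g h).trace
        = (13 + 3 * (star φ ⬝ᵥ (SOPm n 1 (n / 6 + 1) g).mulVec φ)) / 16 := by
    intro g h hg hh hgh
    set s : ℂ := star φ ⬝ᵥ (SOPm n 1 (n / 6 + 1) g).mulVec φ with hs
    have hTS : TSOP n 1 (n / 6 + 1) g h = (-1 : ℂ) • (Usym n h * SOPm n 1 (n / 6 + 1) g) := by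
      rw [TSOP_rel (n / 6 + 1) hq2 hqn g h, eps_eval g h hg hh hgh]
    have d1 : star φ ⬝ᵥ (1 : Op n) *ᵥ φ = 1 := by rw [Matrix.one_mulVec, hunit]
    have d2 : ∀ g' : G2, star φ ⬝ᵥ (Usym n g') *ᵥ φ = 1 := by intro g'; rw [hsym, hunit]
    have d3 : star φ ⬝ᵥ (TSOP n 1 (n / 6 + 1) g h) *ᵥ φ = -s := by
      rw [hTS, Matrix.smul_mulVec, dotProduct_smul, hdot h]
      simp [s]
    have d4 : star φ ⬝ᵥ (Usym n g * TSOP n 1 (n / 6 + 1) g h) *ᵥ φ = -s := by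
      rw [hTS, mul_smul_comm, Matrix.smul_mulVec, dotProduct_smul, hdot g, hdot h]
      simp [s]
    rw [trace_outer, Owin]
    rw [Matrix.smul_mulVec, dotProduct_smul]
    simp only [Matrix.sub_mulVec, Matrix.add_mulVec, dotProduct_sub, dotProduct_add]
    simp only [← Nat.cast_smul_eq_nsmul ℂ, Matrix.smul_mulVec, dotProduct_smul]
    rw [d1, d2 g, d2 h, d2 (g + h), d3, d4]
    simp only [nsmul_eq_mul, smul_eq_mul]
    push_cast
    ring
  refine ⟨key, fun hS g h hg hh hgh => ?_⟩
  rw [key g h hg hh hgh]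
  set s : ℂ := star φ ⬝ᵥ (SOPm n 1 (n / 6 + 1) g).mulVec φ with hs
  have hre : ((13 + 3 * s) / 16).re = 13 / 16 + (3 / 16) * s.re := by
    rw [show (13 + 3 * s) / 16 = (13 / 16 : ℂ) + (3 / 16) * s by ring]
    simp [Complex.add_re, Complex.mul_re]
  rw [hre]
  have := hS g hg
  rw [← hs] at this
  linarith
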